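/- Let A ⊆ ℕ be finite and let 𝒞^1,...,𝒞^k be clusters of A. For each l ∈ {1,...,k}, let Γ^l := Γ(𝒞^l, ρ^l) = {ξ ∈ ℝ : dist(ξ, Q_l^{−1}ℤ) < ρ_l/2} be the set associated to 𝒞^l with parameters Q_l, T_l, ρ_l, and suppose H^1([0,1] ∩ Γ^l) > λ_l. Then there exist τ_1,...,τ_k ∈ [0,1] such that H^1([0,1] ∩ ⋂_{l=1}^k (Γ^l + τ_l)) > ∏_{l=1}^k λ_l, and moreover the set Γ^{1,...,k} := ⋂_{l=1}^k (Γ^l + τ_l) satisfies dist(Γ^{1,...,k} − Γ^{1,...,k}, ⋃_{l=1}^k Σ(𝒞^l)) > 0. -/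

import Mathlib

open MeasureTheory Filter Set Polynomial
open scoped ENNReal Real BigOperators

noncomputable section

/-- The mask polynomial `A(X) = ∑_{a ∈ A} X^a` of a finite set `A ⊆ ℕ`. -/
def maskPoly (A : Finset ℕ) : Polynomial ℤ := ∑ a ∈ A, Polynomial.X ^ a

/-- The accumulating zeroes `S_A^{(2)} = {s ∈ ℕ : Φ_s(X) ∣ A(X), gcd(s, #A) = 1}`. -/
def SA2 (A : Finset ℕ) : Set ℕ :=
  {s | 0 < s ∧ Polynomial.cyclotomic s ℤ ∣ maskPoly A ∧ Nat.gcd s A.card = 1}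

/-- `Γ(𝒞, ρ) = {ξ ∈ ℝ : dist(ξ, Q⁻¹ℤ) < ρ/2}`. -/
def GammaQ (Q : ℕ) (ρ : ℝ) : Set ℝ := {ξ | ∃ z : ℤ, |ξ - (z : ℝ) / (Q : ℝ)| < ρ / 2}

/-- `Σ(𝒞) = {ξ ∈ ℝ : Φ_s(e^{2πiξ}) = 0 for some s ∈ 𝒞}`. -/
def SigmaCluster (𝒞 : Finset ℕ) : Set ℝ :=
  {ξ | ∃ s ∈ 𝒞, Polynomial.eval
    (Complex.exp (2 * (Real.pi : ℂ) * Complex.I * (ξ : ℂ))) (Polynomial.cyclotomic s ℂ) = 0}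

/-! ### Auxiliary measure-theoretic lemmas -/

lemma vol_inter_Icc_eq_Ioc (S : Set ℝ) (a b : ℝ) :
    volume (S ∩ Set.Icc a b) = volume (S ∩ Set.Ioc a b) :=
  measure_congr ((Filter.EventuallyEq.refl _ _).inter Ioc_ae_eq_Icc.symm)

lemma vol_periodic_Ioc (G : Set ℝ) (hGm : MeasurableSet G)
    (hper : ∀ x : ℝ, x ∈ G ↔ x + 1 ∈ G) (c : ℝ) :
    volume (G ∩ Set.Ioc c (c+1)) = volume (G ∩ Set.Ioc 0 (0+1)) := by
  have hZ : ∀ (n : ℤ) (x : ℝ), x + n ∈ G ↔ x ∈ G := by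
    intro n
    induction n using Int.induction_on with
    | zero => simp
    | succ k ih =>
        intro x
        have : x + ((k:ℤ)+1 : ℤ) = (x + (k:ℤ)) + 1 := by push_cast; ring
        rw [this, ← hper, ih]
    | pred k ih =>
        intro x
        have h2 : x + (-(k:ℤ)-1 : ℤ) + 1 = x + (-(k:ℤ) : ℤ) := by push_cast; ring
        rw [show x + (-(k:ℤ)-1 : ℤ) ∈ G ↔ x + (-(k:ℤ)-1 : ℤ) + 1 ∈ G from hper _, h2, ih]
  have key : ∀ g : AddSubgroup.zmultiples (1:ℝ), (fun x => (g:ℝ) +ᵥ x) ⁻¹' G = G := by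
    rintro ⟨g, hg⟩
    obtain ⟨n, rfl⟩ := AddSubgroup.mem_zmultiples_iff.mp hg
    ext x
    have : (n • (1:ℝ)) +ᵥ x = x + (n:ℤ) := by
      simp [vadd_eq_add]; ring
    simp only [Set.mem_preimage, this, hZ]
  exact (isAddFundamentalDomain_Ioc one_pos c).measure_set_eq
    (isAddFundamentalDomain_Ioc one_pos 0) hGm key

lemma exists_translate (G G' : Set ℝ) (hG : MeasurableSet G) (hG' : MeasurableSet G')
    (hper' : ∀ x : ℝ, x ∈ G' ↔ x + 1 ∈ G')
    (a b : ℝ≥0∞) (ha : a < volume (Set.Icc (0:ℝ) 1 ∩ G))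
    (hb : b < volume (Set.Icc (0:ℝ) 1 ∩ G')) :
    ∃ τ ∈ Set.Icc (0:ℝ) 1,
      a * b < volume (Set.Icc (0:ℝ) 1 ∩ (G ∩ {x | x - τ ∈ G'})) := by
  set I : Set ℝ := Set.Icc (0:ℝ) 1 with hIdef
  have hI : MeasurableSet I := measurableSet_Icc
  set f : ℝ → ℝ → ℝ≥0∞ := fun τ x => G.indicator 1 x * G'.indicator 1 (x - τ) with hf
  have hmeas2 : Measurable (Function.uncurry f) := by
    apply Measurable.mul
    · exact (measurable_const.indicator hG).comp measurable_snd
    · exact (measurable_const.indicator hG').comp (measurable_snd.sub measurable_fst)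
  have hFτ : ∀ τ : ℝ, volume (I ∩ (G ∩ {x | x - τ ∈ G'})) = ∫⁻ x in I, f τ x := by
    intro τ
    have hpre : MeasurableSet {x : ℝ | x - τ ∈ G'} :=
      hG'.preimage (measurable_id.sub measurable_const)
    have hind : ∀ x : ℝ, f τ x = (G ∩ {x | x - τ ∈ G'}).indicator 1 x := by
      intro x
      by_cases h1 : x ∈ G <;> by_cases h2 : x - τ ∈ G' <;>
        simp [hf, Set.indicator_apply, h1, h2]
    simp only [hind]
    rw [lintegral_indicator_one (hG.inter hpre), Measure.restrict_apply (hG.inter hpre),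
      Set.inter_comm]
  have hInner : ∀ x : ℝ, (∫⁻ τ in I, G'.indicator 1 (x - τ)) = volume (I ∩ G') := by
    intro x
    have hmp : MeasurePreserving (fun τ : ℝ => x - τ) volume volume :=
      Measure.measurePreserving_sub_left volume x
    have hpre : MeasurableSet ((fun τ : ℝ => x - τ) ⁻¹' G') :=
      hG'.preimage (measurable_const.sub measurable_id)
    have h1 : ∀ τ : ℝ, G'.indicator (1 : ℝ → ℝ≥0∞) (x - τ)
        = ((fun τ : ℝ => x - τ) ⁻¹' G').indicator 1 τ := by
      intro τ; by_cases h : x - τ ∈ G' <;> simp [Set.indicator_apply, h]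
    have hset : (fun τ : ℝ => x - τ) ⁻¹' G' ∩ I
        = (fun τ : ℝ => x - τ) ⁻¹' (G' ∩ Set.Icc (x-1) x) := by
      ext τ
      simp only [Set.mem_inter_iff, Set.mem_preimage, Set.mem_Icc, hIdef]
      constructor
      · rintro ⟨hg, h0, h1'⟩; exact ⟨hg, by linarith, by linarith⟩
      · rintro ⟨hg, h0, h1'⟩; exact ⟨hg, by linarith, by linarith⟩
    calc (∫⁻ τ in I, G'.indicator 1 (x - τ))
        = ∫⁻ τ in I, ((fun τ : ℝ => x - τ) ⁻¹' G').indicator 1 τ := by simp only [h1]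
      _ = volume ((fun τ : ℝ => x - τ) ⁻¹' G' ∩ I) := by
          rw [lintegral_indicator_one hpre, Measure.restrict_apply hpre]
      _ = volume ((fun τ : ℝ => x - τ) ⁻¹' (G' ∩ Set.Icc (x-1) x)) := by rw [hset]
      _ = volume (G' ∩ Set.Icc (x-1) x) :=
          hmp.measure_preimage (hG'.inter measurableSet_Icc).nullMeasurableSet
      _ = volume (G' ∩ Set.Ioc (x-1) x) := vol_inter_Icc_eq_Ioc _ _ _
      _ = volume (G' ∩ Set.Ioc (x-1) ((x-1)+1)) := by rw [sub_add_cancel]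
      _ = volume (G' ∩ Set.Ioc 0 (0+1)) := vol_periodic_Ioc G' hG' hper' _
      _ = volume (G' ∩ Set.Icc 0 1) := by
          rw [zero_add, ← vol_inter_Icc_eq_Ioc]
      _ = volume (I ∩ G') := by rw [Set.inter_comm]
  have hswap : (∫⁻ τ in I, ∫⁻ x in I, f τ x) = ∫⁻ x in I, ∫⁻ τ in I, f τ x :=
    lintegral_lintegral_swap hmeas2.aemeasurable
  have htotal : (∫⁻ τ in I, volume (I ∩ (G ∩ {x | x - τ ∈ G'})))
      = volume (I ∩ G) * volume (I ∩ G') := by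
    calc (∫⁻ τ in I, volume (I ∩ (G ∩ {x | x - τ ∈ G'})))
        = ∫⁻ τ in I, ∫⁻ x in I, f τ x := by simp only [hFτ]
      _ = ∫⁻ x in I, ∫⁻ τ in I, f τ x := hswap
      _ = ∫⁻ x in I, G.indicator 1 x * volume (I ∩ G') := by
          refine lintegral_congr fun x => ?_
          have hm : Measurable fun τ : ℝ => G'.indicator (1 : ℝ → ℝ≥0∞) (x - τ) :=
            (measurable_const.indicator hG').comp (measurable_const.sub measurable_id)
          simp only [hf]
          rw [lintegral_const_mul _ hm, hInner x]
      _ = (∫⁻ x in I, G.indicator 1 x) * volume (I ∩ G') :=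
          lintegral_mul_const _ (measurable_const.indicator hG)
      _ = volume (I ∩ G) * volume (I ∩ G') := by
          rw [lintegral_indicator_one hG, Measure.restrict_apply hG, Set.inter_comm]
  by_contra hcon
  push_neg at hcon
  have hle : (∫⁻ τ in I, volume (I ∩ (G ∩ {x | x - τ ∈ G'}))) ≤ a * b * volume I := by
    calc (∫⁻ τ in I, volume (I ∩ (G ∩ {x | x - τ ∈ G'})))
        ≤ ∫⁻ _ in I, a * b := setLIntegral_mono' hI hcon
      _ = a * b * volume I := by rw [setLIntegral_const]
  have hvolI : volume I = 1 := by simp [hIdef]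
  rw [hvolI, mul_one, htotal] at hle
  exact absurd hle (not_le.mpr (ENNReal.mul_lt_mul ha hb))

lemma exists_translates (n : ℕ) :
    ∀ (G : Fin (n+1) → Set ℝ) (a : Fin (n+1) → ℝ≥0∞),
    (∀ l, MeasurableSet (G l)) → (∀ l (x : ℝ), x ∈ G l ↔ x + 1 ∈ G l) →
    (∀ l, a l < volume (Set.Icc (0:ℝ) 1 ∩ G l)) →
    ∃ τ : Fin (n+1) → ℝ, (∀ l, τ l ∈ Set.Icc (0:ℝ) 1) ∧
      ∏ l, a l < volume (Set.Icc (0:ℝ) 1 ∩ ⋂ l, {x | x - τ l ∈ G l}) := by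
  induction n with
  | zero =>
    intro G a hm hp ha
    refine ⟨fun _ => 0, fun _ => Set.left_mem_Icc.mpr zero_le_one, ?_⟩
    have h1 : (⋂ l : Fin 1, {x : ℝ | x - (0:ℝ) ∈ G l}) = G 0 := by
      ext x
      simp only [Set.mem_iInter, Set.mem_setOf_eq, sub_zero]
      exact ⟨fun h => h 0, fun h l => by rw [Fin.fin_one_eq_zero l]; exact h⟩
    rw [Fin.prod_univ_one, h1]
    exact ha 0
  | succ n IH =>
    intro G a hm hp ha
    obtain ⟨τ', hτ'I, hτ'⟩ := IH (fun l => G l.succ) (fun l => a l.succ)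
      (fun l => hm _) (fun l => hp _) (fun l => ha _)
    set H := ⋂ l : Fin (n+1), {x : ℝ | x - τ' l ∈ G l.succ} with hH
    have hHm : MeasurableSet H :=
      MeasurableSet.iInter fun l => (hm l.succ).preimage (measurable_id.sub measurable_const)
    have hHp : ∀ x : ℝ, x ∈ H ↔ x + 1 ∈ H := by
      intro x
      simp only [hH, Set.mem_iInter, Set.mem_setOf_eq]
      refine forall_congr' fun l => ?_
      have h2 : x + 1 - τ' l = (x - τ' l) + 1 := by ring
      rw [h2]
      exact hp l.succ _
    obtain ⟨τ₀, hτ₀I, h0⟩ := exists_translate H (G 0) hHm (hm 0) (hp 0)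
      (∏ l : Fin (n+1), a l.succ) (a 0) hτ' (ha 0)
    refine ⟨Fin.cases τ₀ τ', fun l => ?_, ?_⟩
    · exact Fin.cases hτ₀I hτ'I l
    · have hset : (⋂ l : Fin (n+2), {x : ℝ | x - (Fin.cases τ₀ τ' : Fin (n+2) → ℝ) l ∈ G l})
          = H ∩ {x | x - τ₀ ∈ G 0} := by
        ext x
        simp only [hH, Set.mem_iInter, Set.mem_setOf_eq, Set.mem_inter_iff, Fin.forall_fin_succ,
          Fin.cases_zero, Fin.cases_succ]
        tauto
      rw [Fin.prod_univ_succ, hset, mul_comm]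
      exact h0

/-! ### Auxiliary arithmetic lemmas -/

lemma sigma_far (Qn s : ℕ) (hQn : 0 < Qn) (hs : 0 < s) (hnd : ¬ s ∣ Qn)
    (m : ℤ) (hcop : Int.gcd m s = 1) (z : ℤ) :
    (((s / Nat.gcd s Qn : ℕ) : ℝ) * Qn)⁻¹ ≤ |(m : ℝ)/s - z/Qn| := by
  set r := Nat.gcd s Qn with hr
  have hrpos : 0 < r := Nat.gcd_pos_of_pos_left _ hs
  set t := s / r with ht
  set q := Qn / r with hq
  have hrt : r * t = s := Nat.mul_div_cancel' (Nat.gcd_dvd_left s Qn)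
  have hrq : r * q = Qn := Nat.mul_div_cancel' (Nat.gcd_dvd_right s Qn)
  have htpos : 0 < t := Nat.div_pos (Nat.le_of_dvd hs (Nat.gcd_dvd_left s Qn)) hrpos
  have hqpos : 0 < q := Nat.div_pos (Nat.le_of_dvd hQn (Nat.gcd_dvd_right s Qn)) hrpos
  have hcoptq : Nat.Coprime t q := Nat.coprime_div_gcd_div_gcd hrpos
  have hne : m * q - z * t ≠ 0 := by
    intro hzero
    have hdvd1 : (t : ℤ) ∣ m * q := ⟨z, by linarith⟩
    have hcop' : Int.gcd (t : ℤ) (q : ℤ) = 1 := by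
      rw [Int.gcd_natCast_natCast]; exact hcoptq
    have hdvdm : (t : ℤ) ∣ m := Int.dvd_of_dvd_mul_left_of_gcd_one hdvd1 hcop'
    have hdvds : (t : ℤ) ∣ (s : ℤ) := by exact_mod_cast Dvd.intro_left r hrt
    have hdvdgcd : (t : ℤ) ∣ (Int.gcd m s : ℤ) := Int.dvd_coe_gcd hdvdm hdvds
    rw [hcop] at hdvdgcd
    have ht1 : t = 1 := by
      have := Int.le_of_dvd one_pos hdvdgcd
      omega
    apply hnd
    have : s = r := by rw [← hrt, ht1, mul_one]
    rw [this]
    exact Nat.gcd_dvd_right s Qn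
  have hone : (1 : ℝ) ≤ |((m * q - z * t : ℤ) : ℝ)| := by
    rw [← Int.cast_abs]
    exact_mod_cast Int.one_le_abs (by omega)
  have hrR : (0:ℝ) < r := by exact_mod_cast hrpos
  have htR : (0:ℝ) < t := by exact_mod_cast htpos
  have hqR : (0:ℝ) < q := by exact_mod_cast hqpos
  have hsR : (s:ℝ) = (r:ℝ) * t := by exact_mod_cast hrt.symm
  have hQR : (Qn:ℝ) = (r:ℝ) * q := by exact_mod_cast hrq.symm
  have hexpr : (m : ℝ)/s - z/Qn = ((m * q - z * t : ℤ) : ℝ) / ((r:ℝ) * t * q) := by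
    rw [hsR, hQR]
    push_cast
    field_simp
  rw [hexpr, abs_div, abs_of_pos (by positivity : (0:ℝ) < (r:ℝ) * t * q)]
  rw [hQR]
  have hden : ((t:ℝ) * ((r:ℝ) * q))⁻¹ = 1 / ((r:ℝ) * t * q) := by
    rw [one_div]; ring_nf
  rw [hden]
  apply div_le_div_of_nonneg_right hone ?_ |>.trans_eq ?_
  · positivity
  · rfl

lemma sigma_mem (s : ℕ) (hs : 0 < s) (w : ℝ)
    (hw : Polynomial.eval (Complex.exp (2 * (Real.pi : ℂ) * Complex.I * (w : ℂ)))
      (Polynomial.cyclotomic s ℂ) = 0) :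
    ∃ m : ℤ, Int.gcd m s = 1 ∧ w = m / s := by
  haveI : NeZero ((s : ℂ)) := ⟨Nat.cast_ne_zero.mpr hs.ne'⟩
  set ζ : ℂ := Complex.exp (2 * (Real.pi : ℂ) * Complex.I * (w : ℂ)) with hζ
  have hprim : IsPrimitiveRoot ζ s := Polynomial.isRoot_cyclotomic_iff.mp hw
  have hpow : ζ ^ s = 1 := hprim.pow_eq_one
  have hexp : Complex.exp ((s : ℂ) * (2 * (Real.pi : ℂ) * Complex.I * (w : ℂ))) = 1 := by
    rw [Complex.exp_nat_mul]; exact hpow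
  obtain ⟨m, hm⟩ := Complex.exp_eq_one_iff.mp hexp
  have h2πI : (2 * (Real.pi : ℂ) * Complex.I) ≠ 0 := by
    simp [Complex.I_ne_zero, Real.pi_ne_zero, Complex.ofReal_ne_zero]
  have hsw : (s : ℂ) * (w : ℂ) = (m : ℂ) := by
    apply mul_left_cancel₀ h2πI
    calc 2 * (Real.pi : ℂ) * Complex.I * ((s : ℂ) * (w : ℂ))
        = (s : ℂ) * (2 * (Real.pi : ℂ) * Complex.I * (w : ℂ)) := by ring
      _ = (m : ℂ) * (2 * (Real.pi : ℂ) * Complex.I) := hm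
      _ = 2 * (Real.pi : ℂ) * Complex.I * (m : ℂ) := by ring
  have hswR : (s : ℝ) * w = (m : ℝ) := by
    exact_mod_cast hsw
  have hsR : (s : ℝ) ≠ 0 := Nat.cast_ne_zero.mpr hs.ne'
  have hwval : w = (m : ℝ) / s := by field_simp [hsR] at hswR ⊢; linarith
  refine ⟨m, ?_, hwval⟩
  set d := Int.gcd m (s : ℤ) with hd
  have hds : (d : ℤ) ∣ (s : ℤ) := Int.gcd_dvd_right _ _
  have hdm : (d : ℤ) ∣ m := Int.gcd_dvd_left _ _
  have hdsN : d ∣ s := by exact_mod_cast hds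
  have hdpos : 0 < d := by
    rcases Nat.eq_zero_or_pos d with h0 | h
    · exfalso
      have := Int.gcd_eq_zero_iff.mp (hd ▸ h0)
      simp at this
      omega
    · exact h
  obtain ⟨t', hst'⟩ := hdsN
  obtain ⟨m', hmm'⟩ := hdm
  have ht'pos : 0 < t' := by
    rcases Nat.eq_zero_or_pos t' with h0 | h
    · exfalso; rw [h0, mul_zero] at hst'; omega
    · exact h
  have hkey : ζ ^ t' = 1 := by
    have ht'w : (t' : ℂ) * (w : ℂ) = (m' : ℂ) := by
      have hdC : ((d : ℕ) : ℂ) ≠ 0 := Nat.cast_ne_zero.mpr hdpos.ne'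
      apply mul_left_cancel₀ hdC
      have h1 : ((d : ℕ) : ℂ) * ((t' : ℂ) * (w : ℂ)) = (s : ℂ) * w := by
        rw [hst']; push_cast; ring
      have h2 : ((d : ℕ) : ℂ) * (m' : ℂ) = (m : ℂ) := by
        rw [hmm']; push_cast; ring
      rw [h1, h2, hsw]
    rw [hζ, ← Complex.exp_nat_mul]
    have : (t' : ℂ) * (2 * (Real.pi : ℂ) * Complex.I * (w : ℂ))
        = (m' : ℂ) * (2 * (Real.pi : ℂ) * Complex.I) := by
      calc (t' : ℂ) * (2 * (Real.pi : ℂ) * Complex.I * (w : ℂ))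
          = ((t' : ℂ) * w) * (2 * (Real.pi : ℂ) * Complex.I) := by ring
        _ = (m' : ℂ) * (2 * (Real.pi : ℂ) * Complex.I) := by rw [ht'w]
    rw [this]
    exact Complex.exp_int_mul_two_pi_mul_I m'
  have hsdvd : s ∣ t' := hprim.dvd_of_pow_eq_one t' hkey
  have ht'le : t' ≤ s := by
    calc t' ≤ d * t' := Nat.le_mul_of_pos_left t' hdpos
    _ = s := hst'.symm
  have hst : s = t' := Nat.le_antisymm (Nat.le_of_dvd ht'pos hsdvd) ht'le
  have : d * t' = 1 * t' := by rw [← hst', hst, one_mul]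
  exact Nat.eq_of_mul_eq_mul_right ht'pos this

/-! ### Properties of `GammaQ` -/

lemma gammaQ_measurable (Q : ℕ) (ρ : ℝ) : MeasurableSet (GammaQ Q ρ) := by
  have : GammaQ Q ρ = ⋃ z : ℤ, Metric.ball ((z : ℝ) / Q) (ρ / 2) := by
    ext ξ
    simp [GammaQ, Metric.mem_ball, Real.dist_eq, Set.mem_iUnion]
  rw [this]
  exact MeasurableSet.iUnion fun z => measurableSet_ball

lemma gammaQ_periodic (Q : ℕ) (hQ : 0 < Q) (ρ : ℝ) :
    ∀ x : ℝ, x ∈ GammaQ Q ρ ↔ x + 1 ∈ GammaQ Q ρ := by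
  intro x
  have hQR : (Q : ℝ) ≠ 0 := Nat.cast_ne_zero.mpr hQ.ne'
  constructor
  · rintro ⟨z, hz⟩
    refine ⟨z + Q, ?_⟩
    have : x + 1 - ((z + Q : ℤ) : ℝ) / Q = x - (z : ℝ) / Q := by
      push_cast; field_simp; ring
    rw [this]; exact hz
  · rintro ⟨z, hz⟩
    refine ⟨z - Q, ?_⟩
    have : x - ((z - Q : ℤ) : ℝ) / Q = x + 1 - (z : ℝ) / Q := by
      push_cast; field_simp; ring
    rw [this]; exact hz

lemma image_add_eq (t : ℝ) (S : Set ℝ) : (fun x => x + t) '' S = {x | x - t ∈ S} := by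
  ext x
  constructor
  · rintro ⟨g, hg, rfl⟩; simpa using hg
  · intro hx; exact ⟨x - t, hx, by ring⟩

/-- **Intersecting translated cluster SLV sets**: given clusters `𝒞^1, …, 𝒞^k` of `A`
with associated sets `Γ^l = Γ(𝒞^l, ρ_l)` satisfying `H^1([0,1] ∩ Γ^l) > λ_l`, there are
translations `τ_1, …, τ_k ∈ [0,1]` with
`H^1([0,1] ∩ ⋂_l (Γ^l + τ_l)) > ∏_l λ_l` and
`dist(⋂_l (Γ^l + τ_l) - ⋂_l (Γ^l + τ_l), ⋃_l Σ(𝒞^l)) > 0`. -/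
theorem translated_cluster_SLV_sets (A : Finset ℕ) (k : ℕ) (hk : 1 ≤ k)
    (𝒞 : Fin k → Finset ℕ) (h𝒞 : ∀ l, ↑(𝒞 l) ⊆ SA2 A) (h𝒞ne : ∀ l, (𝒞 l).Nonempty)
    (Q U : Fin k → ℕ) (hQ : ∀ l, 0 < Q l)
    (hQU : ∀ l, (𝒞 l).lcm id = Q l * U l)
    (hndvd : ∀ l, ∀ s ∈ 𝒞 l, ¬ s ∣ Q l)
    (ρ lam : Fin k → ℝ)
    (hρ : ∀ l, 0 < ρ l ∧
      ρ l < ((Q l : ℝ) * ((((𝒞 l).sup fun s => s / Nat.gcd s (Q l)) : ℕ) : ℝ))⁻¹)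
    (hlam : ∀ l, 0 < lam l)
    (hmeas : ∀ l, ENNReal.ofReal (lam l) < volume (Set.Icc (0 : ℝ) 1 ∩ GammaQ (Q l) (ρ l))) :
    ∃ τ : Fin k → ℝ, (∀ l, τ l ∈ Set.Icc (0 : ℝ) 1) ∧
      ENNReal.ofReal (∏ l, lam l) <
        volume (Set.Icc (0 : ℝ) 1 ∩ ⋂ l, (fun x => x + τ l) '' GammaQ (Q l) (ρ l)) ∧
      ∃ ε : ℝ, 0 < ε ∧
        ∀ x ∈ ⋂ l, (fun x => x + τ l) '' GammaQ (Q l) (ρ l),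
        ∀ y ∈ ⋂ l, (fun x => x + τ l) '' GammaQ (Q l) (ρ l),
        ∀ w ∈ ⋃ l, SigmaCluster (𝒞 l), ε ≤ |x - y - w| := by
  obtain ⟨n, rfl⟩ : ∃ n, k = n + 1 := ⟨k - 1, (Nat.succ_pred_eq_of_pos hk).symm⟩
  obtain ⟨τ, hτI, hτ⟩ := exists_translates n (fun l => GammaQ (Q l) (ρ l))
    (fun l => ENNReal.ofReal (lam l))
    (fun l => gammaQ_measurable _ _) (fun l => gammaQ_periodic _ (hQ l) _) hmeas
  refine ⟨τ, hτI, ?_, ?_⟩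
  · have himg : ∀ l : Fin (n+1),
        (fun x => x + τ l) '' GammaQ (Q l) (ρ l) = {x | x - τ l ∈ GammaQ (Q l) (ρ l)} :=
      fun l => image_add_eq _ _
    simp only [himg]
    rw [ENNReal.ofReal_prod_of_nonneg (fun i _ => (hlam i).le)]
    exact hτ
  · refine ⟨Finset.univ.inf' Finset.univ_nonempty
      (fun l => ((Q l : ℝ) * ((((𝒞 l).sup fun s => s / Nat.gcd s (Q l)) : ℕ) : ℝ))⁻¹ - ρ l),
      ?_, ?_⟩
    · rw [Finset.lt_inf'_iff]
      intro l _
      have h1 := (hρ l).1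
      have h2 := (hρ l).2
      linarith
    · intro x hx y hy w hw
      rw [Set.mem_iUnion] at hw
      obtain ⟨l, s, hsmem, hroot⟩ := hw
      have hspos : 0 < s := (h𝒞 l hsmem).1
      obtain ⟨m, hcop, hwval⟩ := sigma_mem s hspos w hroot
      obtain ⟨gx, hgxΓ, hgx⟩ := Set.mem_iInter.mp hx l
      obtain ⟨gy, hgyΓ, hgy⟩ := Set.mem_iInter.mp hy l
      obtain ⟨z1, hz1⟩ := hgxΓ
      obtain ⟨z2, hz2⟩ := hgyΓ
      have hgx' : gx + τ l = x := hgx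
      have hgy' : gy + τ l = y := hgy
      have hfar := sigma_far (Q l) s (hQ l) hspos (hndvd l s hsmem) m hcop (z1 - z2)
      set t : ℕ := s / Nat.gcd s (Q l) with htdef
      set T : ℕ := (𝒞 l).sup fun s => s / Nat.gcd s (Q l) with hTdef
      have htT : t ≤ T := Finset.le_sup (f := fun s => s / Nat.gcd s (Q l)) hsmem
      have htpos : 0 < t := Nat.div_pos (Nat.le_of_dvd hspos (Nat.gcd_dvd_left _ _))
        (Nat.gcd_pos_of_pos_left _ hspos)
      have hQpos : (0:ℝ) < Q l := by exact_mod_cast hQ l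
      have htR : (0:ℝ) < t := by exact_mod_cast htpos
      have hTtR : (t : ℝ) ≤ T := by exact_mod_cast htT
      have hinv : ((Q l : ℝ) * (T : ℝ))⁻¹ ≤ ((t : ℝ) * (Q l : ℝ))⁻¹ := by
        apply inv_anti₀ (by positivity)
        calc (t:ℝ) * Q l ≤ (T : ℝ) * Q l := mul_le_mul_of_nonneg_right hTtR hQpos.le
          _ = (Q l : ℝ) * T := by ring
      have hzz : ((z1 - z2 : ℤ) : ℝ) / (Q l) = (z1:ℝ)/(Q l) - (z2:ℝ)/(Q l) := by
        push_cast; ring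
      have hwfar : ((t:ℝ) * Q l)⁻¹ ≤ |w - ((z1:ℝ)/(Q l) - (z2:ℝ)/(Q l))| := by
        rw [hwval, ← hzz]
        exact hfar
      have hdiff : x - y - ((z1:ℝ)/(Q l) - (z2:ℝ)/(Q l))
          = (gx - (z1:ℝ)/(Q l)) - (gy - (z2:ℝ)/(Q l)) := by
        rw [← hgx', ← hgy']; ring
      have htri : |x - y - ((z1:ℝ)/(Q l) - (z2:ℝ)/(Q l))|
          ≤ |gx - (z1:ℝ)/(Q l)| + |gy - (z2:ℝ)/(Q l)| := by
        rw [hdiff]; exact abs_sub _ _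
      have htri2 : |w - ((z1:ℝ)/(Q l) - (z2:ℝ)/(Q l))|
          ≤ |w - (x - y)| + |x - y - ((z1:ℝ)/(Q l) - (z2:ℝ)/(Q l))| := abs_sub_le _ _ _
      rw [abs_sub_comm w (x - y)] at htri2
      have hεle : Finset.univ.inf' Finset.univ_nonempty
          (fun l => ((Q l : ℝ) * ((((𝒞 l).sup fun s => s / Nat.gcd s (Q l)) : ℕ) : ℝ))⁻¹ - ρ l)
          ≤ ((Q l : ℝ) * (T : ℝ))⁻¹ - ρ l := Finset.inf'_le _ (Finset.mem_univ l)
      have habs : |x - y - w| = |(x - y) - w| := by ring_nf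
      linarith
end
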